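/- There is an absolute constant C such that for every integer c ≥ 0 there exists a DFA over the alphabet {0,1}×{0,1} with at most C·(log₂(c+1)+1) states that accepts a word w if and only if, writing x for the word of first components of w and y for the word of second components, both x and y are valid Fibonacci representations and [x] − c = [y] (equivalently [x] = [y] + c). -/

import Mathlib

/-- The Fibonacci (Zeckendorf) value of a binary word written msd-first:
`[x₁⋯x_ℓ] = Σ_j x_j · F_{ℓ−j+2}`. -/
def fibVal : List Bool → ℕ
  | [] => 0
  | a :: rest => (if a then Nat.fib (rest.length + 2) else 0) + fibVal rest

/-- A binary word is a valid Fibonacci representation if it has no factor `11`. -/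
def ValidFib (w : List Bool) : Prop :=
  w.Chain' (fun a b => a = false ∨ b = false)

namespace FibSub

open Real goldenRatio List

/-- shifted Fibonacci value, weights one index lower -/
def fibShift : List Bool → ℕ
  | [] => 0
  | a :: rest => (if a then Nat.fib (rest.length + 1) else 0) + fibShift rest

lemma fibVal_append (p v : List Bool) :
    fibVal (p ++ v) =
      Nat.fib (v.length + 1) * fibVal p + Nat.fib v.length * fibShift p + fibVal v := by
  induction p with
  | nil => simp [fibVal, fibShift]
  | cons a p ih =>
      have hfib : Nat.fib (v.length + (p.length + 1) + 1)
          = Nat.fib v.length * Nat.fib (p.length + 1)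
            + Nat.fib (v.length + 1) * Nat.fib (p.length + 2) :=
        Nat.fib_add v.length (p.length + 1)
      cases a
      · simp only [fibVal, fibShift, List.cons_append, List.length_append, if_false,
          Bool.false_eq_true, zero_add, List.append_eq, ih]
      · simp only [fibVal, fibShift, List.cons_append, List.length_append, if_true,
          List.append_eq, ih]
        rw [show p.length + v.length + 2 = v.length + (p.length + 1) + 1 by ring, hfib]
        ring

lemma fibVal_snoc (w : List Bool) (b : Bool) :
    fibVal (w ++ [b]) = fibVal w + fibShift w + (if b then 1 else 0) := by
  have := fibVal_append w [b]
  simpa [fibVal] using this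

lemma fibShift_snoc (w : List Bool) (b : Bool) :
    fibShift (w ++ [b]) = fibVal w + (if b then 1 else 0) := by
  induction w with
  | nil => simp [fibShift, fibVal]
  | cons a w ih =>
      cases a <;> simp [fibShift, fibVal, ih, List.length_append] <;> ring

lemma fibVal_lt : ∀ w : List Bool, ValidFib w → fibVal w < Nat.fib (w.length + 2)
  | [] , _ => by simp [fibVal]
  | false :: r, h => by
      have hr : ValidFib r := (List.isChain_cons.mp h).2
      have := fibVal_lt r hr
      have hm : Nat.fib (r.length + 2) ≤ Nat.fib (r.length + 3) := Nat.fib_mono (by omega)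
      simp only [fibVal, List.length_cons, if_false, Bool.false_eq_true, zero_add]
      calc fibVal r < Nat.fib (r.length + 2) := this
        _ ≤ Nat.fib (r.length + 1 + 2) := hm
  | [true], _ => by simp [fibVal]; decide
  | true :: true :: r, h => by
      rcases (List.isChain_cons_cons.mp h).1 with h' | h' <;> simp at h'
  | true :: false :: r, h => by
      have hr : ValidFib (false :: r) := (List.isChain_cons_cons.mp h).2
      have hr' : ValidFib r := (List.isChain_cons.mp hr).2
      have h2 := fibVal_lt r hr'
      simp only [fibVal, List.length_cons, if_true, zero_add, Bool.false_eq_true, if_false] at h2 ⊢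
      have h3 : Nat.fib (r.length + 2) + Nat.fib (r.length + 3) = Nat.fib (r.length + 4) :=
        (Nat.fib_add_two).symm
      rw [show r.length + 1 + 2 = r.length + 3 by omega,
        show r.length + 1 + 1 + 2 = r.length + 4 by omega]
      omega

end FibSub
section RealLemmas

open Real goldenRatio

lemma phi_mul_fib_le (n : ℕ) : φ * Nat.fib n ≤ φ ^ n := by
  induction n using Nat.twoStepInduction with
  | zero => simp [goldenRatio_pos.le]
  | one => simp
  | more n ih1 ih2 =>
      have : (Nat.fib (n + 2) : ℝ) = Nat.fib n + Nat.fib (n + 1) := by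
        rw [Nat.fib_add_two]; push_cast; ring
      rw [this]
      have : φ ^ (n + 2) = φ ^ n + φ ^ (n + 1) := by
        have := goldenRatio_sq
        calc φ ^ (n+2) = φ ^ n * φ ^ 2 := by ring
          _ = φ ^ n * (φ + 1) := by rw [goldenRatio_sq]
          _ = φ ^ n + φ ^ n * φ := by ring
          _ = φ ^ n + φ ^ (n+1) := by ring
      rw [this, mul_add]
      exact add_le_add ih1 ih2

lemma pow_le_fib (n : ℕ) : φ ^ n ≤ (Nat.fib (n + 2) : ℝ) := by
  induction n using Nat.twoStepInduction with
  | zero => simp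
  | one => norm_num [Nat.fib]; exact goldenRatio_lt_two.le
  | more n ih1 ih2 =>
      have h1 : (Nat.fib (n + 2 + 2) : ℝ) = Nat.fib (n + 2) + Nat.fib (n + 1 + 2) := by
        rw [show n + 2 + 2 = (n+2) + 2 by rfl, Nat.fib_add_two]
        push_cast
        rw [show n + 2 + 1 = n + 1 + 2 by omega]
      have h2 : φ ^ (n + 2) = φ ^ n + φ ^ (n + 1) := by
        calc φ ^ (n+2) = φ ^ n * φ ^ 2 := by ring
          _ = φ ^ n * (φ + 1) := by rw [goldenRatio_sq]
          _ = φ ^ n + φ ^ (n+1) := by ring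
      rw [h1, h2]
      exact add_le_add ih1 ih2

lemma fib_le_pow (n : ℕ) : (Nat.fib (n + 2) : ℝ) ≤ φ ^ (n + 1) := by
  induction n using Nat.twoStepInduction with
  | zero => simp [one_lt_goldenRatio.le]
  | one =>
      norm_num [Nat.fib]
      nlinarith [goldenRatio_sq, one_lt_goldenRatio]
  | more n ih1 ih2 =>
      have h1 : (Nat.fib (n + 2 + 2) : ℝ) = Nat.fib (n + 2) + Nat.fib (n + 1 + 2) := by
        rw [show n + 2 + 2 = (n+2) + 2 by rfl, Nat.fib_add_two]
        push_cast
        rw [show n + 2 + 1 = n + 1 + 2 by omega]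
      have h2 : φ ^ (n + 2 + 1) = φ ^ (n + 1) + φ ^ (n + 1 + 1) := by
        calc φ ^ (n+2+1) = φ ^ (n+1) * φ ^ 2 := by ring
          _ = φ ^ (n+1) * (φ + 1) := by rw [goldenRatio_sq]
          _ = φ ^ (n+1) + φ ^ (n+1+1) := by ring
      rw [h1, h2]
      exact add_le_add ih1 ih2

lemma abs_goldConj : |ψ| = φ⁻¹ := by
  rw [abs_of_neg goldenConj_neg, ← inv_goldenRatio]

lemma abs_fibVal_sub_phi_shift (w : List Bool) :
    |(fibVal w : ℝ) - φ * FibSub.fibShift w| ≤ φ - φ * (φ ^ w.length)⁻¹ := by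
  induction w with
  | nil => simp [fibVal, FibSub.fibShift]
  | cons a w ih =>
      have hgold : (0:ℝ) < φ := goldenRatio_pos
      have hpow : (0:ℝ) < φ ^ w.length := pow_pos hgold _
      have key : (fibVal (a :: w) : ℝ) - φ * FibSub.fibShift (a :: w)
          = (if a then ψ ^ (w.length + 1) else 0)
            + ((fibVal w : ℝ) - φ * FibSub.fibShift w) := by
        have hconj := fib_succ_sub_goldenRatio_mul_fib (w.length + 1)
        cases a <;> simp only [fibVal, FibSub.fibShift, if_true, if_false] <;> push_cast
        · ring
        · rw [← hconj]; push_cast; ring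
      rw [key]
      have habs : |(if a then ψ ^ (w.length + 1) else 0 : ℝ)| ≤ (φ ^ (w.length + 1))⁻¹ := by
        cases a
        · simp only [if_false, Bool.false_eq_true, abs_zero]
          positivity
        · simp only [if_true]
          rw [abs_pow, abs_goldConj, inv_pow]
      have e1 : (φ ^ (w.length + 1))⁻¹ + φ * (φ ^ (w.length + 1))⁻¹ = φ * (φ ^ w.length)⁻¹ := by
        have : (φ ^ (w.length + 1))⁻¹ * (1 + φ) = φ * (φ ^ w.length)⁻¹ := by
          calc (φ ^ (w.length + 1))⁻¹ * (1 + φ) = (φ ^ w.length)⁻¹ * (φ⁻¹ * (φ + 1)) := by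
                rw [pow_succ, mul_inv]; ring
            _ = (φ ^ w.length)⁻¹ * (φ⁻¹ * φ ^ 2) := by rw [goldenRatio_sq]
            _ = φ * (φ ^ w.length)⁻¹ := by
                rw [sq]; field_simp
        linarith [this]
      calc |(if a then ψ ^ (w.length + 1) else 0 : ℝ)
            + ((fibVal w : ℝ) - φ * FibSub.fibShift w)|
          ≤ |(if a then ψ ^ (w.length + 1) else 0 : ℝ)|
            + |(fibVal w : ℝ) - φ * FibSub.fibShift w| := abs_add_le _ _
        _ ≤ (φ ^ (w.length + 1))⁻¹ + (φ - φ * (φ ^ w.length)⁻¹) := add_le_add habs ih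
        _ = φ - φ * (φ ^ (a :: w).length)⁻¹ := by
            simp only [List.length_cons]
            linarith [e1]

lemma abs_fibVal_sub_phi_shift' (w : List Bool) :
    |(fibVal w : ℝ) - φ * FibSub.fibShift w| ≤ φ := by
  refine (abs_fibVal_sub_phi_shift w).trans ?_
  have : 0 < φ * (φ ^ w.length)⁻¹ := by positivity
  linarith

end RealLemmas
namespace FibSub

open Real goldenRatio

variable (c : ℕ)

/-- number of binary digits scale -/
def Lc : ℕ := Nat.log 2 (c + 1)

def Mc : ℕ := 2 * Lc c + 3

/-- approximate center `c / φ^(m+1)` -/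
def ctr (m : ℕ) : ℤ := ((c * Nat.fib (Mc c)) / Nat.fib (m + Mc c + 1) : ℕ)

def dlo (m : ℕ) (E : ℤ) : ℤ :=
  ((c : ℤ) - Nat.fib (m + 2) - Nat.fib m * E) / (Nat.fib (m + 1) : ℤ)

noncomputable def stripF (m : ℕ) : Finset (ℤ × ℤ) :=
  (Finset.Icc (ctr c m - 5) (ctr c m + 5)).biUnion fun E =>
    (Finset.Icc (dlo c m E) (dlo c m E + 4)).image fun D => (D, E)

noncomputable def box : Finset (ℤ × ℤ) := Finset.Icc (-13) 13 ×ˢ Finset.Icc (-13) 13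

noncomputable def Sc : Finset (ℤ × ℤ) := box ∪ (Finset.range (Mc c + 1)).biUnion (stripF c)

lemma zero_mem_Sc : ((0 : ℤ), (0 : ℤ)) ∈ Sc c := by
  apply Finset.mem_union_left
  simp only [box, Finset.mem_product, Finset.mem_Icc]
  norm_num

def b2i (a : Bool) : ℤ := if a then 1 else 0

/-- state type -/
abbrev Q : Type := Option ({p // p ∈ Sc c} × (Bool × Bool))

noncomputable def stepc (s : Q c) (ab : Bool × Bool) : Q c :=
  match s with
  | none => none
  | some q =>
      if q.2.1 && ab.1 || q.2.2 && ab.2 then none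
      else
        let p : ℤ × ℤ := (q.1.val.1 + q.1.val.2 + (b2i ab.1 - b2i ab.2),
                          q.1.val.1 + (b2i ab.1 - b2i ab.2))
        if h : p ∈ Sc c then some (⟨p, h⟩, ab) else none

noncomputable def Mach : DFA (Bool × Bool) (Q c) where
  step := stepc c
  start := some (⟨((0 : ℤ), (0 : ℤ)), zero_mem_Sc c⟩, (false, false))
  accept := {s | ∃ q, s = some q ∧ q.1.val.1 = (c : ℤ)}

/-- difference of values -/
def Dif (w : List (Bool × Bool)) : ℤ :=
  (fibVal (w.map Prod.fst) : ℤ) - fibVal (w.map Prod.snd)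

def Eif (w : List (Bool × Bool)) : ℤ :=
  (fibShift (w.map Prod.fst) : ℤ) - fibShift (w.map Prod.snd)

def lastB (l : List Bool) : Bool := l.getLastD false

lemma Dif_snoc (w : List (Bool × Bool)) (a b : Bool) :
    Dif (w ++ [(a, b)]) = Dif w + Eif w + (b2i a - b2i b) := by
  simp only [Dif, Eif, List.map_append, List.map_cons, List.map_nil, fibVal_snoc, b2i]
  push_cast
  ring

lemma Eif_snoc (w : List (Bool × Bool)) (a b : Bool) :
    Eif (w ++ [(a, b)]) = Dif w + (b2i a - b2i b) := by
  simp only [Dif, Eif, List.map_append, List.map_cons, List.map_nil, fibShift_snoc, b2i]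
  push_cast
  ring

lemma validFib_snoc_iff (l : List Bool) (a : Bool) :
    ValidFib (l ++ [a]) ↔ ValidFib l ∧ (lastB l && a) = false := by
  constructor
  · intro h
    rcases List.isChain_append.mp h with ⟨h1, _, h3⟩
    refine ⟨h1, ?_⟩
    rcases l.eq_nil_or_concat with rfl | ⟨l', b, rfl⟩
    · simp [lastB]
    · have := h3 (lastB (l' ++ [b])) (by simp [lastB, List.getLastD_concat,
        List.getLast?_concat]) a (by simp)
      rcases this with h' | h' <;> simp [h']
  · rintro ⟨h1, h2⟩
    apply List.isChain_append.mpr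
    refine ⟨h1, List.isChain_singleton _, ?_⟩
    intro x hx y hy
    simp only [List.head?_cons, Option.mem_def, Option.some.injEq] at hy
    subst hy
    rcases l.eq_nil_or_concat with rfl | ⟨l', b, rfl⟩
    · simp at hx
    · simp only [List.concat_eq_append] at hx h2 ⊢
      rw [List.getLast?_concat] at hx
      simp only [Option.mem_def, Option.some.injEq] at hx
      subst hx
      have : lastB (l' ++ [b]) = b := by simp [lastB, List.getLastD_concat]
      rw [this] at h2
      rcases Bool.and_eq_false_iff.mp h2 with h' | h'
      · left; simpa using h'
      · right; simpa using h'

lemma lastB_snoc (l : List Bool) (a : Bool) : lastB (l ++ [a]) = a := by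
  simp [lastB, List.getLastD_concat]

end FibSub
namespace FibSub

open Real goldenRatio

lemma strip_int (c : ℕ) (p v : List (Bool × Bool))
    (hx : ValidFib ((p ++ v).map Prod.fst)) (hy : ValidFib ((p ++ v).map Prod.snd))
    (hval : fibVal ((p ++ v).map Prod.fst) = fibVal ((p ++ v).map Prod.snd) + c) :
    |(Nat.fib (v.length + 1) : ℤ) * Dif p + (Nat.fib v.length : ℤ) * Eif p - c|
      ≤ (Nat.fib (v.length + 2) : ℤ) := by
  have hmapx : (p ++ v).map Prod.fst = p.map Prod.fst ++ v.map Prod.fst := List.map_append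
  have hmapy : (p ++ v).map Prod.snd = p.map Prod.snd ++ v.map Prod.snd := List.map_append
  rw [hmapx] at hx hval
  rw [hmapy] at hy hval
  have hlx : (v.map Prod.fst).length = v.length := List.length_map _
  have hly : (v.map Prod.snd).length = v.length := List.length_map _
  have Ex := fibVal_append (p.map Prod.fst) (v.map Prod.fst)
  have Ey := fibVal_append (p.map Prod.snd) (v.map Prod.snd)
  rw [hlx] at Ex
  rw [hly] at Ey
  have hxv : ValidFib (v.map Prod.fst) := (List.isChain_append.mp hx).2.1
  have hyv : ValidFib (v.map Prod.snd) := (List.isChain_append.mp hy).2.1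
  have bx := fibVal_lt _ hxv
  have by' := fibVal_lt _ hyv
  rw [hlx] at bx
  rw [hly] at by'
  have Exz := congrArg (Nat.cast : ℕ → ℤ) Ex
  have Eyz := congrArg (Nat.cast : ℕ → ℤ) Ey
  have hvalz := congrArg (Nat.cast : ℕ → ℤ) hval
  push_cast at Exz Eyz hvalz
  have eq : (Nat.fib (v.length + 1) : ℤ) * Dif p + (Nat.fib v.length : ℤ) * Eif p - c
      = (fibVal (v.map Prod.snd) : ℤ) - (fibVal (v.map Prod.fst) : ℤ) := by
    simp only [Dif, Eif]
    linear_combination Eyz - Exz + hvalz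
  rw [eq, abs_le]
  have bxz : (fibVal (v.map Prod.fst) : ℤ) < (Nat.fib (v.length + 2) : ℤ) := by exact_mod_cast bx
  have byz : (fibVal (v.map Prod.snd) : ℤ) < (Nat.fib (v.length + 2) : ℤ) := by exact_mod_cast by'
  constructor <;> [skip; skip] <;>
    [nlinarith [Int.ofNat_nonneg (fibVal (v.map Prod.snd))];
     nlinarith [Int.ofNat_nonneg (fibVal (v.map Prod.fst))]]

lemma hphi_inv (p : List (Bool × Bool)) :
    |(Dif p : ℝ) - φ * (Eif p : ℝ)| ≤ 2 * φ := by
  have h1 := abs_fibVal_sub_phi_shift' (p.map Prod.fst)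
  have h2 := abs_fibVal_sub_phi_shift' (p.map Prod.snd)
  have key : (Dif p : ℝ) - φ * (Eif p : ℝ)
      = ((fibVal (p.map Prod.fst) : ℝ) - φ * fibShift (p.map Prod.fst))
        - ((fibVal (p.map Prod.snd) : ℝ) - φ * fibShift (p.map Prod.snd)) := by
    simp only [Dif, Eif]
    push_cast
    ring
  rw [key]
  calc |_ - _| ≤ |(fibVal (p.map Prod.fst) : ℝ) - φ * fibShift (p.map Prod.fst)|
        + |(fibVal (p.map Prod.snd) : ℝ) - φ * fibShift (p.map Prod.snd)| := abs_sub _ _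
    _ ≤ φ + φ := add_le_add h1 h2
    _ = 2 * φ := by ring

lemma c_lt_pow (c : ℕ) : (c : ℝ) < φ ^ (2 * Lc c + 2) := by
  have h1 : c + 1 < 2 ^ (Lc c + 1) := Nat.lt_pow_succ_log_self (by norm_num) (c + 1)
  have h2 : (c : ℝ) < 2 ^ (Lc c + 1) := by exact_mod_cast Nat.lt_of_succ_lt h1
  have h3 : (2 : ℝ) ≤ φ ^ 2 := by
    rw [goldenRatio_sq]
    linarith [one_lt_goldenRatio]
  calc (c : ℝ) < 2 ^ (Lc c + 1) := h2
    _ ≤ (φ ^ 2) ^ (Lc c + 1) := pow_le_pow_left₀ (by norm_num) h3 _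
    _ = φ ^ (2 * Lc c + 2) := by rw [← pow_mul]; ring_nf

end FibSub
namespace FibSub

open Real goldenRatio

lemma fib_cast_le_pow (n : ℕ) : (Nat.fib (n + 1) : ℝ) ≤ φ ^ (n + 1) := by
  have h1 := phi_mul_fib_le (n + 1)
  have h2 : (0 : ℝ) ≤ (Nat.fib (n + 1) : ℝ) := by positivity
  nlinarith [one_lt_goldenRatio]

lemma abs_le_of_mul_pow {a k x : ℝ} (ha : 0 < a) (h : |a * x| ≤ k * a) : |x| ≤ k := by
  rw [abs_mul, abs_of_pos ha] at h
  have h2 : a * |x| ≤ a * k := by linarith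
  exact (mul_le_mul_iff_right₀ ha).mp h2

lemma nat_lt_div_succ_mul (a b : ℕ) (hb : 0 < b) : a < (a / b + 1) * b := by
  have h := Nat.div_add_mod a b
  have h2 := Nat.mod_lt a hb
  nlinarith

lemma mem_Sc_of_solution (c : ℕ) (p v : List (Bool × Bool))
    (hx : ValidFib ((p ++ v).map Prod.fst)) (hy : ValidFib ((p ++ v).map Prod.snd))
    (hval : fibVal ((p ++ v).map Prod.fst) = fibVal ((p ++ v).map Prod.snd) + c) :
    (Dif p, Eif p) ∈ Sc c := by
  set m := v.length with hm
  set D := Dif p with hD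
  set E := Eif p with hE
  have hstrip := strip_int c p v hx hy hval
  rw [← hm, ← hD, ← hE] at hstrip
  have hphi := hphi_inv p
  rw [← hD, ← hE] at hphi
  have hpow : (0:ℝ) < φ ^ (m+1) := pow_pos goldenRatio_pos _
  have id1 : φ * (Nat.fib (m+1):ℝ) + (Nat.fib m : ℝ) = φ^(m+1) := goldenRatio_mul_fib_succ_add_fib m
  have hstripR : |(Nat.fib (m+1):ℝ) * (D:ℝ) + (Nat.fib m:ℝ) * (E:ℝ) - (c:ℝ)|
      ≤ (Nat.fib (m+2):ℝ) := by
    have h' : |(((Nat.fib (m+1) : ℤ) * D + (Nat.fib m:ℤ) * E - c : ℤ) : ℝ)|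
        ≤ (((Nat.fib (m+2) : ℤ)) : ℝ) := by
      rw [← Int.cast_abs]
      exact_mod_cast hstrip
    push_cast at h'
    exact h'
  have hE1 : |φ^(m+1) * (E:ℝ) - c| ≤ 3 * φ^(m+1) := by
    have expand : φ^(m+1) * (E:ℝ) - c
        = (Nat.fib (m+1):ℝ) * (φ * E - D) + ((Nat.fib (m+1):ℝ) * D + (Nat.fib m:ℝ) * E - c) := by
      rw [← id1]; ring
    rw [expand]
    have t1 : |(Nat.fib (m+1):ℝ) * (φ * E - D)| ≤ (Nat.fib (m+1):ℝ) * (2*φ) := by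
      rw [abs_mul, abs_of_nonneg (by positivity : (0:ℝ) ≤ (Nat.fib (m+1):ℝ)),
        abs_sub_comm]
      exact mul_le_mul_of_nonneg_left hphi (by positivity)
    have t3 : (Nat.fib (m+1):ℝ) * (2*φ) ≤ 2 * φ^(m+1) := by
      have := phi_mul_fib_le (m+1)
      nlinarith []
    have t4 : (Nat.fib (m+2):ℝ) ≤ φ^(m+1) := fib_le_pow m
    refine (abs_add_le _ _).trans ?_
    have := add_le_add (t1.trans t3) (hstripR.trans t4)
    linarith
  have hcb := c_lt_pow c
  by_cases hcase : m ≤ Mc c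
  · -- strip membership
    have hKpos : 0 < Nat.fib (m + Mc c + 1) := Nat.fib_pos.mpr (by omega)
    have hKposR : (0:ℝ) < (Nat.fib (m + Mc c + 1) : ℝ) := by exact_mod_cast hKpos
    set qn : ℕ := c * Nat.fib (Mc c) / Nat.fib (m + Mc c + 1) with hqn
    have hctrR : ((ctr c m : ℤ) : ℝ) = (qn : ℝ) := by
      have : ctr c m = (qn : ℤ) := rfl
      rw [this]
      simp
    set q : ℝ := ((c * Nat.fib (Mc c) : ℕ) : ℝ) / (Nat.fib (m + Mc c + 1) : ℝ) with hq
    have div1 : qn * Nat.fib (m + Mc c + 1) ≤ c * Nat.fib (Mc c) :=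
      Nat.div_mul_le_self _ _
    have div2 : c * Nat.fib (Mc c) < (qn + 1) * Nat.fib (m + Mc c + 1) :=
      nat_lt_div_succ_mul _ _ hKpos
    have hqctr1 : ((ctr c m : ℤ):ℝ) ≤ q := by
      rw [hctrR, hq, le_div_iff₀ hKposR]
      exact_mod_cast div1
    have hqctr2 : q ≤ ((ctr c m : ℤ):ℝ) + 1 := by
      rw [hctrR, hq, div_le_iff₀ hKposR]
      calc ((c * Nat.fib (Mc c) : ℕ) : ℝ) ≤ (((qn + 1) * Nat.fib (m + Mc c + 1) : ℕ) : ℝ) := by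
            exact_mod_cast div2.le
        _ = ((qn:ℝ) + 1) * (Nat.fib (m + Mc c + 1) : ℝ) := by push_cast; ring
    have idA : φ^(m+1) * (Nat.fib (Mc c) : ℝ)
        = (Nat.fib (m + Mc c + 1) : ℝ) - (Nat.fib (m+1) : ℝ) * ψ^(Mc c) := by
      have h1 := goldenRatio_mul_fib_succ_add_fib m
      have h2 := fib_succ_sub_goldenRatio_mul_fib (Mc c)
      have h3 : ((Nat.fib (m + Mc c + 1)) : ℝ)
          = (Nat.fib m : ℝ) * (Nat.fib (Mc c) : ℝ)
            + (Nat.fib (m+1) : ℝ) * (Nat.fib (Mc c + 1) : ℝ) := by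
        exact_mod_cast congrArg (Nat.cast : ℕ → ℝ) (Nat.fib_add m (Mc c))
      linear_combination (-(Nat.fib (Mc c):ℝ)) * h1 - (Nat.fib (m+1):ℝ) * h2 - h3
    have hKne : (Nat.fib (m + Mc c + 1) : ℝ) ≠ 0 := ne_of_gt hKposR
    have hqK : q * (Nat.fib (m + Mc c + 1) : ℝ) = ((c * Nat.fib (Mc c) : ℕ) : ℝ) :=
      div_mul_cancel₀ _ hKne
    have eq1 : φ^(m+1) * q - c
        = -((c:ℝ) * (Nat.fib (m+1):ℝ) * ψ^(Mc c)) / (Nat.fib (m + Mc c + 1) : ℝ) := by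
      rw [eq_div_iff hKne]
      push_cast at hqK ⊢
      linear_combination φ^(m+1) * hqK + (c : ℝ) * idA
    have hq2 : |φ^(m+1) * q - c| ≤ φ^(m+1) := by
      rw [eq1, abs_div, abs_of_pos hKposR]
      have hnum : |(-((c:ℝ) * (Nat.fib (m+1):ℝ) * ψ^(Mc c)))|
          = (c:ℝ) * (Nat.fib (m+1):ℝ) * |ψ|^(Mc c) := by
        rw [abs_neg, abs_mul, abs_mul, abs_pow, abs_of_nonneg (by positivity : (0:ℝ) ≤ (c:ℝ)),
          abs_of_nonneg (by positivity : (0:ℝ) ≤ (Nat.fib (m+1):ℝ))]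
      rw [hnum]
      have cψ : (c:ℝ) * |ψ|^(Mc c) ≤ 1 := by
        rw [abs_goldConj, inv_pow]
        have hMc : φ^(2 * Lc c + 2) ≤ φ^(Mc c) :=
          pow_le_pow_right₀ one_lt_goldenRatio.le (by simp [Mc])
        have hcφ : (c:ℝ) ≤ φ^(Mc c) := le_trans hcb.le hMc
        rw [mul_inv_le_iff₀ (pow_pos goldenRatio_pos _), one_mul]
        exact hcφ
      have hfb : (Nat.fib (m+1):ℝ) ≤ φ^(m+1) := fib_cast_le_pow m
      have h1K : (1:ℝ) ≤ (Nat.fib (m + Mc c + 1) : ℝ) := by exact_mod_cast hKpos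
      have step1 : (c:ℝ) * (Nat.fib (m+1):ℝ) * |ψ|^(Mc c) ≤ φ^(m+1) := by
        have hmm := mul_le_mul cψ hfb (by positivity) (by norm_num)
        calc (c:ℝ) * (Nat.fib (m+1):ℝ) * |ψ|^(Mc c)
            = ((c:ℝ) * |ψ|^(Mc c)) * (Nat.fib (m+1):ℝ) := by ring
          _ ≤ 1 * φ^(m+1) := hmm
          _ = φ^(m+1) := one_mul _
      calc (c:ℝ) * (Nat.fib (m+1):ℝ) * |ψ|^(Mc c) / (Nat.fib (m + Mc c + 1) : ℝ)
          ≤ (c:ℝ) * (Nat.fib (m+1):ℝ) * |ψ|^(Mc c) / 1 := by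
            apply div_le_div_of_nonneg_left ?_ ?_ h1K <;> positivity
        _ = (c:ℝ) * (Nat.fib (m+1):ℝ) * |ψ|^(Mc c) := by ring
        _ ≤ φ^(m+1) := step1
    have hctr2 : |φ^(m+1) * ((ctr c m : ℤ):ℝ) - c| ≤ 2 * φ^(m+1) := by
      have h1 : |φ^(m+1) * ((ctr c m : ℤ):ℝ) - φ^(m+1) * q| ≤ φ^(m+1) := by
        rw [← mul_sub, abs_mul, abs_of_pos hpow]
        have habs1 : |((ctr c m : ℤ):ℝ) - q| ≤ 1 := by
          rw [abs_le]
          constructor <;> linarith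
        nlinarith [habs1]
      calc |φ^(m+1) * ((ctr c m : ℤ):ℝ) - c|
          ≤ |φ^(m+1) * ((ctr c m : ℤ):ℝ) - φ^(m+1) * q| + |φ^(m+1) * q - c| :=
            abs_sub_le _ _ _
        _ ≤ φ^(m+1) + φ^(m+1) := add_le_add h1 hq2
        _ = 2 * φ^(m+1) := by ring
    have hEc : |E - ctr c m| ≤ 5 := by
      have h1 : |φ^(m+1) * (((E:ℤ):ℝ) - ((ctr c m : ℤ):ℝ))| ≤ 5 * φ^(m+1) := by
        rw [mul_sub]
        calc |φ^(m+1) * ((E:ℤ):ℝ) - φ^(m+1) * ((ctr c m : ℤ):ℝ)|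
            ≤ |φ^(m+1) * ((E:ℤ):ℝ) - c| + |φ^(m+1) * ((ctr c m : ℤ):ℝ) - c| := by
              have h := abs_sub_le (φ^(m+1) * ((E:ℤ):ℝ)) ((c:ℝ))
                (φ^(m+1) * ((ctr c m : ℤ):ℝ))
              rw [abs_sub_comm ((c:ℝ)) _] at h
              exact h
          _ ≤ 3 * φ^(m+1) + 2 * φ^(m+1) := add_le_add hE1 hctr2
          _ = 5 * φ^(m+1) := by ring
      have hreal : |((E:ℤ):ℝ) - ((ctr c m : ℤ):ℝ)| ≤ 5 :=
        abs_le_of_mul_pow hpow (by linarith [h1])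
      have hcast : |((E - ctr c m : ℤ) : ℝ)| ≤ ((5:ℤ):ℝ) := by
        push_cast
        exact hreal
      exact_mod_cast hcast
    have F1pos : (0:ℤ) < (Nat.fib (m+1) : ℤ) := by
      exact_mod_cast Nat.fib_pos.mpr (Nat.succ_pos m)
    obtain ⟨hs1, hs2⟩ := abs_le.mp hstrip
    have h22 : (Nat.fib (m+2):ℤ) ≤ 2 * (Nat.fib (m+1):ℤ) := by
      have h1 : Nat.fib (m+2) = Nat.fib m + Nat.fib (m+1) := Nat.fib_add_two
      have h2 : Nat.fib m ≤ Nat.fib (m+1) := Nat.fib_mono (Nat.le_succ m)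
      have h3 : Nat.fib (m+2) ≤ 2 * Nat.fib (m+1) := by omega
      exact_mod_cast h3
    have hDlo : (c:ℤ) - Nat.fib (m+2) - Nat.fib m * E ≤ (Nat.fib (m+1):ℤ) * D := by linarith
    have hDhi : (Nat.fib (m+1):ℤ) * D
        ≤ ((c:ℤ) - Nat.fib (m+2) - Nat.fib m * E) + 4 * (Nat.fib (m+1):ℤ) := by linarith
    have d1 : dlo c m E ≤ D := by
      have h := Int.ediv_le_ediv F1pos hDlo
      rw [Int.mul_ediv_cancel_left _ (ne_of_gt F1pos)] at h
      exact h
    have d2 : D ≤ dlo c m E + 4 := by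
      have h := Int.ediv_le_ediv F1pos hDhi
      rw [Int.add_mul_ediv_right _ _ (ne_of_gt F1pos),
        Int.mul_ediv_cancel_left _ (ne_of_gt F1pos)] at h
      exact h
    apply Finset.mem_union_right
    refine Finset.mem_biUnion.mpr ⟨m, Finset.mem_range.mpr (by omega), ?_⟩
    refine Finset.mem_biUnion.mpr ⟨E, Finset.mem_Icc.mpr ?_, ?_⟩
    · obtain ⟨he1, he2⟩ := abs_le.mp hEc
      constructor <;> linarith
    · exact Finset.mem_image.mpr ⟨D, Finset.mem_Icc.mpr ⟨d1, d2⟩, rfl⟩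
  · -- box membership
    push_neg at hcase
    have h5 : (c:ℝ) ≤ φ^(m+1) := by
      refine hcb.le.trans (pow_le_pow_right₀ one_lt_goldenRatio.le ?_)
      have hMc : Mc c = 2 * Lc c + 3 := rfl
      omega
    have hEr : |((E:ℤ):ℝ)| ≤ 4 := by
      refine abs_le_of_mul_pow hpow ?_
      calc |φ^(m+1) * ((E:ℤ):ℝ)|
          ≤ |φ^(m+1) * ((E:ℤ):ℝ) - c| + |(c:ℝ)| := by
            have h2 := abs_add_le (φ^(m+1) * ((E:ℤ):ℝ) - c) ((c:ℝ))
            simp only [sub_add_cancel] at h2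
            exact h2
        _ ≤ 3 * φ^(m+1) + φ^(m+1) := by
            refine add_le_add hE1 ?_
            rw [abs_of_nonneg (by positivity)]
            exact h5
        _ = 4 * φ^(m+1) := by ring
    have hEz : |E| ≤ 4 := by
      have h' : ((|E| : ℤ) : ℝ) ≤ ((4 : ℤ) : ℝ) := by
        rw [Int.cast_abs]
        exact_mod_cast hEr
      exact_mod_cast h'
    have hDr : |((D:ℤ):ℝ)| ≤ 13 := by
      have h1 : |((D:ℤ):ℝ) - φ * ((E:ℤ):ℝ)| ≤ 2 * φ := hphi
      have h2 : |φ * ((E:ℤ):ℝ)| ≤ φ * 4 := by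
        rw [abs_mul, abs_of_pos goldenRatio_pos]
        exact mul_le_mul_of_nonneg_left hEr goldenRatio_pos.le
      calc |((D:ℤ):ℝ)| ≤ |((D:ℤ):ℝ) - φ * ((E:ℤ):ℝ)| + |φ * ((E:ℤ):ℝ)| := by
            have h3 := abs_add_le (((D:ℤ):ℝ) - φ * ((E:ℤ):ℝ)) (φ * ((E:ℤ):ℝ))
            simp only [sub_add_cancel] at h3
            exact h3
        _ ≤ 2 * φ + φ * 4 := add_le_add h1 h2
        _ ≤ 13 := by nlinarith [goldenRatio_lt_two, goldenRatio_pos]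
    have hDz : |D| ≤ 13 := by
      have h' : ((|D| : ℤ) : ℝ) ≤ ((13 : ℤ) : ℝ) := by
        rw [Int.cast_abs]
        exact_mod_cast hDr
      exact_mod_cast h'
    apply Finset.mem_union_left
    obtain ⟨hd1, hd2⟩ := abs_le.mp hDz
    obtain ⟨he1, he2⟩ := abs_le.mp hEz
    simp only [box, Finset.mem_product, Finset.mem_Icc]
    refine ⟨⟨?_, ?_⟩, ?_, ?_⟩ <;> linarith

end FibSub
namespace FibSub

open Real goldenRatio

lemma step_none (c : ℕ) (ab : Bool × Bool) : stepc c none ab = none := rfl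

lemma eval_sound (c : ℕ) : ∀ (w : List (Bool × Bool)) (q : {p // p ∈ Sc c} × (Bool × Bool)),
    (Mach c).eval w = some q →
    ValidFib (w.map Prod.fst) ∧ ValidFib (w.map Prod.snd) ∧
      q.1.val.1 = Dif w ∧ q.1.val.2 = Eif w ∧
      q.2.1 = lastB (w.map Prod.fst) ∧ q.2.2 = lastB (w.map Prod.snd) := by
  intro w
  induction w using List.reverseRecOn with
  | nil =>
      intro q hq
      rw [DFA.eval_nil] at hq
      have hq' := Option.some.inj hq
      subst hq'
      refine ⟨List.isChain_nil, List.isChain_nil, ?_, ?_, rfl, rfl⟩ <;>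
        simp [Dif, Eif, fibVal, fibShift]
  | append_singleton w ab ih =>
      obtain ⟨a, b⟩ := ab
      intro q hq
      rw [DFA.eval_append_singleton] at hq
      cases heval : (Mach c).eval w with
      | none => rw [heval] at hq; exact absurd hq (by simp [step_none, Mach])
      | some q0 =>
          rw [heval] at hq
          obtain ⟨hvx, hvy, hD0, hE0, hlx, hly⟩ := ih q0 heval
          have hq2 : stepc c (some q0) (a, b) = some q := hq
          simp only [stepc] at hq2
          by_cases hcond : (q0.2.1 && a || q0.2.2 && b) = true
          · rw [if_pos hcond] at hq2; exact absurd hq2 (by simp)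
          · rw [if_neg hcond] at hq2
            by_cases hmem : ((q0.1.val.1 + q0.1.val.2 + (b2i a - b2i b),
                q0.1.val.1 + (b2i a - b2i b)) : ℤ × ℤ) ∈ Sc c
            · rw [dif_pos hmem] at hq2
              have hq' := Option.some.inj hq2
              subst hq'
              have hba1 : (q0.2.1 && a) = false := by
                cases h : (q0.2.1 && a) with
                | false => rfl
                | true => exact absurd (by simp [h]) hcond
              have hba2 : (q0.2.2 && b) = false := by
                cases h : (q0.2.2 && b) with
                | false => rfl
                | true => exact absurd (by simp [h]) hcond
              have hvx' : ValidFib ((w ++ [(a, b)]).map Prod.fst) := by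
                rw [List.map_append]
                exact (validFib_snoc_iff _ _).mpr ⟨hvx, by rw [← hlx]; exact hba1⟩
              have hvy' : ValidFib ((w ++ [(a, b)]).map Prod.snd) := by
                rw [List.map_append]
                exact (validFib_snoc_iff _ _).mpr ⟨hvy, by rw [← hly]; exact hba2⟩
              refine ⟨hvx', hvy', ?_, ?_, ?_, ?_⟩
              · show q0.1.val.1 + q0.1.val.2 + (b2i a - b2i b) = Dif (w ++ [(a, b)])
                rw [Dif_snoc, hD0, hE0]
              · show q0.1.val.1 + (b2i a - b2i b) = Eif (w ++ [(a, b)])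
                rw [Eif_snoc, hD0]
              · show a = lastB ((w ++ [(a, b)]).map Prod.fst)
                rw [List.map_append]
                simp [lastB_snoc]
              · show b = lastB ((w ++ [(a, b)]).map Prod.snd)
                rw [List.map_append]
                simp [lastB_snoc]
            · rw [dif_neg hmem] at hq2
              exact absurd hq2 (by simp)

lemma eval_complete (c : ℕ) : ∀ (w v : List (Bool × Bool)),
    ValidFib ((w ++ v).map Prod.fst) → ValidFib ((w ++ v).map Prod.snd) →
    fibVal ((w ++ v).map Prod.fst) = fibVal ((w ++ v).map Prod.snd) + c →
    ∃ h : (Dif w, Eif w) ∈ Sc c,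
      (Mach c).eval w
        = some (⟨(Dif w, Eif w), h⟩, (lastB (w.map Prod.fst), lastB (w.map Prod.snd))) := by
  intro w
  induction w using List.reverseRecOn with
  | nil =>
      intro v hx hy hval
      have h0 : ((Dif [], Eif []) : ℤ × ℤ) = ((0 : ℤ), (0 : ℤ)) := by
        simp [Dif, Eif, fibVal, fibShift]
      rw [h0]
      exact ⟨zero_mem_Sc c, rfl⟩
  | append_singleton w ab ih =>
      obtain ⟨a, b⟩ := ab
      intro v hx hy hval
      have hassoc : (w ++ [(a, b)]) ++ v = w ++ ((a, b) :: v) := by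
        simp [List.append_assoc]
      obtain ⟨h0, heval⟩ := ih ((a, b) :: v) (by rwa [hassoc] at hx) (by rwa [hassoc] at hy)
        (by rwa [hassoc] at hval)
      have hmem : (Dif (w ++ [(a, b)]), Eif (w ++ [(a, b)])) ∈ Sc c :=
        mem_Sc_of_solution c (w ++ [(a, b)]) v hx hy hval
      -- validity bits
      have hvxfull : ValidFib (((w ++ [(a, b)]).map Prod.fst)) := by
        have hmap : ((w ++ [(a, b)]) ++ v).map Prod.fst
            = ((w ++ [(a, b)]).map Prod.fst) ++ (v.map Prod.fst) := List.map_append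
        rw [hmap] at hx
        exact (List.isChain_append.mp hx).1
      have hvyfull : ValidFib (((w ++ [(a, b)]).map Prod.snd)) := by
        have hmap : ((w ++ [(a, b)]) ++ v).map Prod.snd
            = ((w ++ [(a, b)]).map Prod.snd) ++ (v.map Prod.snd) := List.map_append
        rw [hmap] at hy
        exact (List.isChain_append.mp hy).1
      have hba1 : (lastB (w.map Prod.fst) && a) = false := by
        have := hvxfull
        rw [List.map_append] at this
        exact ((validFib_snoc_iff _ _).mp this).2
      have hba2 : (lastB (w.map Prod.snd) && b) = false := by
        have := hvyfull
        rw [List.map_append] at this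
        exact ((validFib_snoc_iff _ _).mp this).2
      refine ⟨hmem, ?_⟩
      rw [DFA.eval_append_singleton, heval]
      have hstep : (Mach c).step = stepc c := rfl
      rw [hstep]
      simp only [stepc]
      rw [if_neg (by simp [hba1, hba2])]
      have hpeq : ((Dif w + Eif w + (b2i a - b2i b), Dif w + (b2i a - b2i b)) : ℤ × ℤ)
          = (Dif (w ++ [(a, b)]), Eif (w ++ [(a, b)])) := by
        rw [Dif_snoc, Eif_snoc]
      rw [hpeq, dif_pos hmem]
      congr 1
      refine Prod.ext rfl ?_
      show (a, b) = _
      rw [List.map_append, List.map_append]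
      simp [lastB_snoc]

lemma card_Sc (c : ℕ) : (Sc c).card ≤ 949 + 110 * Lc c := by
  have hbox : (box : Finset (ℤ × ℤ)).card = 729 := by
    rw [box, Finset.card_product, Int.card_Icc]
    rfl
  have hstrip : ∀ m, (stripF c m).card ≤ 55 := by
    intro m
    refine (Finset.card_biUnion_le).trans ?_
    have h1 : ∀ E ∈ Finset.Icc (ctr c m - 5) (ctr c m + 5),
        ((Finset.Icc (dlo c m E) (dlo c m E + 4)).image fun D => (D, E)).card ≤ 5 := by
      intro E _
      refine (Finset.card_image_le).trans ?_
      rw [Int.card_Icc, show dlo c m E + 4 + 1 - dlo c m E = 5 by ring]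
      norm_num
    refine (Finset.sum_le_sum h1).trans ?_
    rw [Finset.sum_const, Int.card_Icc,
      show ctr c m + 5 + 1 - (ctr c m - 5) = 11 by ring, smul_eq_mul]
    decide
  calc (Sc c).card ≤ (box : Finset (ℤ × ℤ)).card
        + ((Finset.range (Mc c + 1)).biUnion (stripF c)).card := Finset.card_union_le _ _
    _ ≤ 729 + (Mc c + 1) * 55 := by
        rw [hbox]
        gcongr
        refine (Finset.card_biUnion_le).trans ?_
        refine (Finset.sum_le_sum (fun m _ => hstrip m)).trans ?_
        rw [Finset.sum_const, Finset.card_range, smul_eq_mul]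
    _ ≤ 949 + 110 * Lc c := by
        have : Mc c = 2 * Lc c + 3 := rfl
        omega

lemma card_Q (c : ℕ) : Fintype.card (Q c) ≤ 4000 * (Nat.log 2 (c + 1) + 1) := by
  have h1 : Fintype.card (Q c) = (Sc c).card * 4 + 1 := by
    rw [Fintype.card_option, Fintype.card_prod, Fintype.card_coe]
    simp
  rw [h1]
  have h2 := card_Sc c
  have h3 : Lc c = Nat.log 2 (c + 1) := rfl
  omega

end FibSub

theorem subtraction_const_state_complexity :
    ∃ C : ℕ, ∀ c : ℕ, ∃ (σ : Type) (_ : Fintype σ) (M : DFA (Bool × Bool) σ),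
      Fintype.card σ ≤ C * (Nat.log 2 (c + 1) + 1) ∧
      ∀ w : List (Bool × Bool),
        w ∈ M.accepts ↔
          ValidFib (w.map Prod.fst) ∧ ValidFib (w.map Prod.snd) ∧
            fibVal (w.map Prod.fst) = fibVal (w.map Prod.snd) + c := by
  refine ⟨4000, fun c => ⟨FibSub.Q c, inferInstance, FibSub.Mach c, FibSub.card_Q c, ?_⟩⟩
  intro w
  constructor
  · intro hw
    rw [DFA.mem_accepts] at hw
    obtain ⟨qq, hq, hvq⟩ := hw
    obtain ⟨h1, h2, h3, _, _, _⟩ := FibSub.eval_sound c w qq hq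
    refine ⟨h1, h2, ?_⟩
    have hDc : FibSub.Dif w = (c : ℤ) := by rw [← h3, hvq]
    have : (fibVal (w.map Prod.fst) : ℤ) - (fibVal (w.map Prod.snd) : ℤ) = (c : ℤ) := hDc
    omega
  · rintro ⟨h1, h2, h3⟩
    obtain ⟨hm, heval⟩ := FibSub.eval_complete c w [] (by simpa) (by simpa) (by simpa)
    rw [DFA.mem_accepts]
    show (FibSub.Mach c).eval w ∈ (FibSub.Mach c).accept
    rw [heval]
    refine ⟨_, rfl, ?_⟩
    show FibSub.Dif w = (c : ℤ)
    unfold FibSub.Dif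
    omega
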